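/- Let F be a self-adjoint operator with F² = I on H and let S be a positive compact injective operator commuting with F. Define |D| = S^{-1/2} + F S^{-1/2} F (an unbounded positive operator) and D = F|D|. Then D is self-adjoint, sign D = F, and D has compact resolvent. -/

import Mathlib

open ContinuousLinearMap

set_option maxHeartbeats 1000000
set_option synthInstance.maxHeartbeats 2000000

private lemma pos_sqrt_unique' {H : Type*} [NormedAddCommGroup H] [InnerProductSpace ℂ H]
    [CompleteSpace H] {P Q : H →L[ℂ] H} (hP : P.IsPositive) (hQ : Q.IsPositive)
    (h : P * P = Q * Q) : P = Q := by
  have hP' := (nonneg_iff_isPositive P).2 hP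
  have hQ' := (nonneg_iff_isPositive Q).2 hQ
  rw [← CFC.sqrt_unique rfl hP', h, CFC.sqrt_unique rfl hQ']

private lemma smul_half_pos' {H : Type*} [NormedAddCommGroup H] [InnerProductSpace ℂ H]
    [CompleteSpace H] {R : H →L[ℂ] H} (hR : R.IsPositive) :
    (((1:ℝ)/2) • R).IsPositive := by
  constructor
  · rw [← isSelfAdjoint_iff_isSymmetric, IsSelfAdjoint, star_smul, star_trivial, hR.isSelfAdjoint.star_eq]
  · intro x
    have h1 : (((1:ℝ)/2) • R).reApplyInnerSelf x = ((1:ℝ)/2) * R.reApplyInnerSelf x := by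
      rw [ContinuousLinearMap.reApplyInnerSelf_apply, ContinuousLinearMap.reApplyInnerSelf_apply,
        ContinuousLinearMap.smul_apply, RCLike.real_smul_eq_coe_smul (K := ℂ),
        inner_smul_real_left, RCLike.smul_re]
    rw [h1]
    exact mul_nonneg (by norm_num) (hR.2 x)

/-- Let `F = F*`, `F² = I`, and let `S` be a compact positive injective
operator commuting with `F`.  Set `|D| = S^{-1/2} + F S^{-1/2} F = 2 S^{-1/2}` and `D = F |D|`.
Then `D` is self-adjoint with compact resolvent and `sign D = F`.  We encode the unbounded
operator `D` through its bounded inverse `B = D⁻¹ = (1/2) F S^{1/2} = (1/2) F R`, where `R` is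
the positive square root of `S`: the claims become that `B` is self-adjoint, compact and
injective, and that in the polar decomposition of `B` (hence of `D`) the partial isometry is
`F`, i.e. `B = F |B|` for the positive square root `|B|` of `B* B`. -/
theorem lifted_operator_selfadjoint_sign_compact_resolvent
    {H : Type*} [NormedAddCommGroup H] [InnerProductSpace ℂ H] [CompleteSpace H]
    (F : H →L[ℂ] H) (hF : IsSelfAdjoint F) (hF2 : F * F = 1)
    (S : H →L[ℂ] H) (hScp : IsCompactOperator S) (hSpos : S.IsPositive)
    (hSinj : Function.Injective S) (hFS : F * S = S * F)
    (R : H →L[ℂ] H) (hRpos : R.IsPositive) (hRsq : R * R = S) :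
    IsSelfAdjoint (((1:ℝ)/2) • (F * R)) ∧
    IsCompactOperator (((1:ℝ)/2) • (F * R)) ∧
    Function.Injective (((1:ℝ)/2) • (F * R)) ∧
    (∀ P : H →L[ℂ] H, P.IsPositive →
      P * P = star (((1:ℝ)/2) • (F * R)) * (((1:ℝ)/2) • (F * R)) →
      ((1:ℝ)/2) • (F * R) = F * P) := by
  classical
  -- F commutes with R
  have hQpos : (F * R * F).IsPositive := by
    have h := hRpos.conj_adjoint F
    rw [hF.adjoint_eq] at h
    have : F ∘L R ∘L F = F * R * F := by rw [mul_assoc]; rfl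
    rwa [this] at h
  have hQsq : (F * R * F) * (F * R * F) = R * R := by
    calc (F * R * F) * (F * R * F) = F * (R * ((F * F) * R)) * F := by simp only [mul_assoc]
    _ = F * S * F := by rw [hF2, one_mul, hRsq]
    _ = S * (F * F) := by rw [hFS, mul_assoc]
    _ = R * R := by rw [hF2, mul_one, hRsq]
  have hFRF : F * R * F = R := pos_sqrt_unique' hQpos hRpos hQsq
  have hFR : F * R = R * F := by
    conv_rhs => rw [← hFRF]
    rw [mul_assoc, hF2, mul_one]
  -- self-adjoint
  have hBsa : IsSelfAdjoint (((1:ℝ)/2) • (F * R)) := by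
    refine IsSelfAdjoint.smul (star_trivial _) ?_
    rw [IsSelfAdjoint, star_mul, hRpos.isSelfAdjoint.star_eq, hF.star_eq, ← hFR]
  -- key norm estimate
  have hest : ∀ u : H, ‖R u‖ ^ 2 ≤ ‖u‖ * ‖S u‖ := by
    intro u
    have hsym := isSelfAdjoint_iff_isSymmetric.mp hRpos.isSelfAdjoint
    have h1 : (inner ℂ (R u) (R u) : ℂ) = inner ℂ u (S u) := by
      have h2 : R (R u) = S u := by rw [← ContinuousLinearMap.mul_apply, hRsq]
      calc (inner ℂ (R u) (R u) : ℂ) = inner ℂ u (R (R u)) := hsym u (R u)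
      _ = inner ℂ u (S u) := by rw [h2]
    have h3 : (‖R u‖ : ℝ) ^ 2 = RCLike.re (inner ℂ u (S u) : ℂ) := by
      rw [← h1, inner_self_eq_norm_sq]
    rw [h3]
    calc RCLike.re (inner ℂ u (S u) : ℂ) ≤ ‖(inner ℂ u (S u) : ℂ)‖ := RCLike.re_le_norm _
    _ ≤ ‖u‖ * ‖S u‖ := norm_inner_le_norm _ _
  -- R is compact
  have hRcp : IsCompactOperator R := by
    rw [isCompactOperator_iff_exists_mem_nhds_isCompact_closure_image]
    refine ⟨Metric.ball 0 1, Metric.ball_mem_nhds _ one_pos, ?_⟩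
    refine TotallyBounded.isCompact_of_isClosed ?_ isClosed_closure
    refine TotallyBounded.closure ?_
    rw [Metric.totallyBounded_iff]
    intro ε hε
    have hδ : (0:ℝ) < ε ^ 2 / 2 := by positivity
    have tbS : TotallyBounded (⇑S '' Metric.ball 0 1) :=
      ((hScp.isCompact_closure_image_ball (𝕜₁ := ℂ) 1).totallyBounded).subset subset_closure
    obtain ⟨t, hts, htf, htcov⟩ :=
      totallyBounded_iff_subset.mp tbS _ (Metric.dist_mem_uniformity hδ)
    set g : H → H := fun y =>
      if h : ∃ x ∈ Metric.ball (0:H) 1, S x = y then h.choose else 0 with hgdef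
    refine ⟨(⇑R ∘ g) '' t, htf.image _, ?_⟩
    rintro _ ⟨x, hx, rfl⟩
    have hSx : S x ∈ ⋃ y ∈ t, {z | (z, y) ∈ {p : H × H | dist p.1 p.2 < ε ^ 2 / 2}} :=
      htcov ⟨x, hx, rfl⟩
    obtain ⟨y, hyt, hyd⟩ := Set.mem_iUnion₂.mp hSx
    have hy' : ∃ x' ∈ Metric.ball (0:H) 1, S x' = y := by
      obtain ⟨x', hx', rfl⟩ := hts hyt
      exact ⟨x', hx', rfl⟩
    have hgb : g y ∈ Metric.ball (0:H) 1 := by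
      rw [hgdef]; simp only [dif_pos hy']; exact hy'.choose_spec.1
    have hgS : S (g y) = y := by
      rw [hgdef]; simp only [dif_pos hy']; exact hy'.choose_spec.2
    refine Set.mem_iUnion₂.mpr ⟨R (g y), ⟨y, hyt, rfl⟩, ?_⟩
    rw [Metric.mem_ball, dist_eq_norm, ← map_sub]
    have h1 : ‖R (x - g y)‖ ^ 2 ≤ ‖x - g y‖ * ‖S (x - g y)‖ := hest _
    have h2 : ‖x - g y‖ < 2 := by
      have hx1 : ‖x‖ < 1 := by simpa using hx
      have hg1 : ‖g y‖ < 1 := by simpa using hgb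
      calc ‖x - g y‖ ≤ ‖x‖ + ‖g y‖ := norm_sub_le _ _
      _ < 2 := by linarith
    have h3 : ‖S (x - g y)‖ < ε ^ 2 / 2 := by
      rw [map_sub, ← dist_eq_norm, hgS]
      exact hyd
    nlinarith [norm_nonneg (R (x - g y)), norm_nonneg (x - g y), norm_nonneg (S (x - g y))]
  -- B is compact
  have hBcp : IsCompactOperator (((1:ℝ)/2) • (F * R)) := by
    have h1 : IsCompactOperator (⇑F ∘ ⇑R) := hRcp.continuous_comp F.continuous
    have h2 : IsCompactOperator (((1:ℝ)/2) • (⇑F ∘ ⇑R)) := h1.smul _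
    have h3 : ⇑(((1:ℝ)/2) • (F * R)) = ((1:ℝ)/2) • (⇑F ∘ ⇑R) := by
      funext x; simp [ContinuousLinearMap.mul_apply]
    rwa [h3]
  -- injective
  have hRinj : Function.Injective R := by
    intro a b hab
    apply hSinj
    have : R (R a) = R (R b) := by rw [hab]
    simpa [← ContinuousLinearMap.mul_apply, hRsq] using this
  have hFinj : Function.Injective F := by
    intro a b hab
    have : (F * F) a = (F * F) b := by simp [ContinuousLinearMap.mul_apply, hab]
    simpa [hF2] using this
  have hBinj : Function.Injective (((1:ℝ)/2) • (F * R)) := by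
    intro a b hab
    simp only [ContinuousLinearMap.smul_apply, ContinuousLinearMap.mul_apply] at hab
    have h2 : F (R a) = F (R b) := by
      have := congrArg (fun z => (2:ℝ) • z) hab
      simpa [smul_smul, show (2:ℝ)*(1/2) = 1 by norm_num] using this
    exact hRinj (hFinj h2)
  refine ⟨hBsa, hBcp, hBinj, ?_⟩
  -- polar part
  intro P hP hPsq
  have hhalfR : (((1:ℝ)/2) • R).IsPositive := smul_half_pos' hRpos
  have hstar : star (((1:ℝ)/2) • (F * R)) = ((1:ℝ)/2) • (F * R) := hBsa
  have hsq : star (((1:ℝ)/2) • (F * R)) * (((1:ℝ)/2) • (F * R))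
      = (((1:ℝ)/2) • R) * (((1:ℝ)/2) • R) := by
    rw [hstar, smul_mul_smul_comm, smul_mul_smul_comm]
    congr 1
    calc F * R * (F * R) = F * (R * F) * R := by simp only [mul_assoc]
    _ = F * (F * R) * R := by rw [← hFR]
    _ = (F * F) * (R * R) := by simp only [mul_assoc]
    _ = R * R := by rw [hF2, one_mul]
  have hPR : P = ((1:ℝ)/2) • R := pos_sqrt_unique' hP hhalfR (by rw [hPsq, hsq])
  rw [hPR, mul_smul_comm]
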